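/- If the norm of a Banach space X is measurable with respect to the σ-algebra generated by X* (the Baire σ-algebra of the weak topology), then X* is weak*-separable. -/

import Mathlib

open Filter Topology MeasureTheory


lemma measurableSet_countable_iSup {ι α : Type*} {m : ι → MeasurableSpace α} {s : Set α}
    (hs : MeasurableSet[⨆ i, m i] s) :
    ∃ T : Set ι, T.Countable ∧ MeasurableSet[⨆ i ∈ T, m i] s := by
  rw [MeasurableSpace.measurableSet_iSup] at hs
  induction hs with
  | basic u hu =>
    obtain ⟨i, hi⟩ := hu
    refine ⟨{i}, Set.countable_singleton i, ?_⟩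
    exact (le_iSup₂ (f := fun j (_ : j ∈ ({i} : Set ι)) => m j) i rfl) _ hi
  | empty => exact ⟨∅, Set.countable_empty, @MeasurableSet.empty _ (⨆ i ∈ (∅:Set ι), m i)⟩
  | compl u _ ih => obtain ⟨T, hTc, hT⟩ := ih; exact ⟨T, hTc, hT.compl⟩
  | iUnion f _ ih =>
    choose T hTc hT using ih
    refine ⟨⋃ n, T n, Set.countable_iUnion hTc, MeasurableSet.iUnion fun n => ?_⟩
    exact (biSup_mono (fun i (hi : i ∈ T n) => Set.mem_iUnion.2 ⟨n, hi⟩) :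
      _ ≤ ⨆ i ∈ ⋃ k, T k, m i) _ (hT n)

lemma exists_span_match {X : Type*} [NormedAddCommGroup X] [NormedSpace ℝ X]
    (f : ℕ → (X →L[ℝ] ℝ)) (htotal : ∀ y : X, (∀ n, f n y = 0) → y = 0)
    (g : X →L[ℝ] ℝ) (s : Finset X) :
    ∃ h ∈ Submodule.span ℝ (Set.range f), ∀ x ∈ s, h x = g x := by
  classical
  let ev : X → ((X →L[ℝ] ℝ) →ₗ[ℝ] ℝ) := fun x =>
    { toFun := fun h => h x, map_add' := fun a b => rfl, map_smul' := fun c a => rfl }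
  let Φ : (X →L[ℝ] ℝ) →ₗ[ℝ] (s → ℝ) := LinearMap.pi fun i => ev (i : X)
  by_cases hg : Φ g ∈ (Submodule.span ℝ (Set.range f)).map Φ
  · obtain ⟨h, hh, hΦ⟩ := hg
    exact ⟨h, hh, fun x hx => congrFun hΦ ⟨x, hx⟩⟩
  · exfalso
    obtain ⟨φ, hφg, hφV⟩ :=
      ((Submodule.span ℝ (Set.range f)).map Φ).exists_dual_map_eq_bot_of_notMem hg inferInstance
    set y : X := ∑ i : s, φ (fun j => if i = j then 1 else 0) • (i : X) with hy
    have key : ∀ h : X →L[ℝ] ℝ, φ (Φ h) = h y := by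
      intro h
      rw [LinearMap.pi_apply_eq_sum_univ φ (Φ h), hy, map_sum]
      refine Finset.sum_congr rfl fun i _ => ?_
      simp [Φ, ev, smul_eq_mul, mul_comm]
    have hy0 : y = 0 := by
      apply htotal
      intro n
      rw [← key]
      have h1 : Φ (f n) ∈ (Submodule.span ℝ (Set.range f)).map Φ :=
        Submodule.mem_map_of_mem (Submodule.subset_span ⟨n, rfl⟩)
      have h2 := Submodule.mem_map_of_mem (f := φ) h1
      rw [hφV] at h2
      simpa using h2
    exact hφg (by rw [key g, hy0, map_zero])

/-- The Baire σ-algebra of the weak topology of a Banach space: the σ-algebra on `X`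
generated by the continuous linear functionals. -/
def weakBaire (X : Type*) [NormedAddCommGroup X] [NormedSpace ℝ X] : MeasurableSpace X :=
  ⨆ f : X →L[ℝ] ℝ, MeasurableSpace.comap f (borel ℝ)

/-- If the norm of a Banach space `X` is measurable with respect to the σ-algebra
generated by `X*` (the Baire σ-algebra of the weak topology), then the dual `X*` is
weak*-separable. -/
theorem wStarSeparable_of_norm_weakBaire_measurable
    {X : Type*} [NormedAddCommGroup X] [NormedSpace ℝ X] [CompleteSpace X]
    (hmeas : Measurable[weakBaire X] (fun x : X => ‖x‖)) :
    ∃ D : Set (WeakDual ℝ X), D.Countable ∧ closure D = Set.univ := by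
  classical
  have hmeas' : Measurable[⨆ f : X →L[ℝ] ℝ, MeasurableSpace.comap f (borel ℝ)]
      (fun x : X => ‖x‖) := hmeas
  -- Step 1: a countable family of functionals determining the norm
  have hA : ∀ q : ℚ, ∃ T : Set (X →L[ℝ] ℝ), T.Countable ∧
      MeasurableSet[⨆ i ∈ T, MeasurableSpace.comap i (borel ℝ)]
        ((fun x : X => ‖x‖) ⁻¹' Set.Iio (q : ℝ)) :=
    fun q => measurableSet_countable_iSup (ι := X →L[ℝ] ℝ)
      (m := fun i => MeasurableSpace.comap (i : X → ℝ) (borel ℝ))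
      (hmeas' measurableSet_Iio)
  choose T hTc hTm using hA
  have hT0c : (insert (0 : X →L[ℝ] ℝ) (⋃ q : ℚ, T q)).Countable :=
    (Set.countable_iUnion hTc).insert _
  obtain ⟨f, hf⟩ := hT0c.exists_eq_range ⟨0, Set.mem_insert _ _⟩
  -- each set is measurable wrt ⨆ n, comap (f n)
  have hTm' : ∀ q : ℚ, MeasurableSet[⨆ n, MeasurableSpace.comap (f n) (borel ℝ)]
      ((fun x : X => ‖x‖) ⁻¹' Set.Iio (q : ℝ)) := by
    intro q
    have hle : (⨆ i ∈ T q, MeasurableSpace.comap i (borel ℝ)) ≤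
        ⨆ n, MeasurableSpace.comap (f n) (borel ℝ) := by
      refine iSup₂_le fun i hi => ?_
      have : i ∈ Set.range f := hf ▸ Set.mem_insert_iff.2 (Or.inr (Set.mem_iUnion.2 ⟨q, hi⟩))
      obtain ⟨n, rfl⟩ := this
      exact le_iSup (fun n => MeasurableSpace.comap (f n) (borel ℝ)) n
    exact hle _ (hTm q)
  -- the map into the product
  set F : X → (ℕ → ℝ) := fun x n => f n x with hF
  have hle : (⨆ n, MeasurableSpace.comap (f n) (borel ℝ)) ≤
      MeasurableSpace.comap F MeasurableSpace.pi := by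
    refine iSup_le fun n => ?_
    have h1 : (f n : X → ℝ) = (fun v : ℕ → ℝ => v n) ∘ F := rfl
    calc MeasurableSpace.comap (f n) (borel ℝ)
        = MeasurableSpace.comap F (MeasurableSpace.comap (fun v : ℕ → ℝ => v n) (borel ℝ)) := by
          rw [MeasurableSpace.comap_comp]; rfl
      _ ≤ MeasurableSpace.comap F MeasurableSpace.pi := by
          refine MeasurableSpace.comap_mono ?_
          have : Measurable (fun v : ℕ → ℝ => v n) := measurable_pi_apply n
          exact this.comap_le
  -- totality
  have htotal : ∀ y : X, (∀ n, f n y = 0) → y = 0 := by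
    intro y hy
    have hFy : F y = F 0 := by
      funext n; simp [hF, hy n]
    have hmem : ∀ q : ℚ, 0 < q → ‖y‖ < (q : ℝ) := by
      intro q hq
      obtain ⟨s, _, hs⟩ := MeasurableSpace.measurableSet_comap.1 (hle _ (hTm' q))
      have h0 : (0 : X) ∈ F ⁻¹' s := by
        rw [hs]; simp [Rat.cast_pos.2 hq]
      have hy' : y ∈ F ⁻¹' s := by
        show F y ∈ s; rw [hFy]; exact h0
      rw [hs] at hy'
      exact hy'
    have : ‖y‖ ≤ 0 := by
      by_contra hpos
      push_neg at hpos
      obtain ⟨q, hq0, hq1⟩ := exists_rat_btwn hpos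
      exact absurd (hmem q (by exact_mod_cast hq0)) (not_lt.2 hq1.le)
    simpa using norm_le_zero_iff.1 this
  -- Step 2: the countable dense set
  refine ⟨Set.range (fun c : ℕ →₀ ℚ =>
      ((c.sum fun n q => (q : ℝ) • f n : X →L[ℝ] ℝ) : WeakDual ℝ X)),
    Set.countable_range _, ?_⟩
  rw [Set.eq_univ_iff_forall]
  intro g
  have hemb : IsEmbedding (fun (h : WeakDual ℝ X) (x : X) => topDualPairing ℝ X h x) :=
    WeakBilin.isEmbedding ContinuousLinearMap.coe_injective
  rw [hemb.toIsInducing.closure_eq_preimage_closure_image]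
  set ρ : WeakDual ℝ X → (X → ℝ) := fun h x => topDualPairing ℝ X h x with hρ
  have hbasis : (𝓝 (ρ g)).HasBasis
      (fun If : Set X × (X → ℝ) => If.1.Finite ∧ ∀ x ∈ If.1, 0 < If.2 x)
      (fun If => If.1.pi fun x => Metric.ball (ρ g x) (If.2 x)) := by
    rw [nhds_pi]
    exact Filter.hasBasis_pi fun x => Metric.nhds_basis_ball
  rw [Set.mem_preimage, mem_closure_iff_nhds_basis hbasis]
  rintro ⟨I, ε⟩ ⟨hIfin, hε⟩
  rcases I.eq_empty_or_nonempty with rfl | hIne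
  · exact ⟨ρ ((0 : ℕ →₀ ℚ).sum fun n q => (q : ℝ) • f n),
      ⟨_, ⟨0, rfl⟩, rfl⟩, by simp⟩
  -- exact matching on the finite set
  set s : Finset X := hIfin.toFinset with hsdef
  have hsne : s.Nonempty := (Set.Finite.toFinset_nonempty hIfin).2 hIne
  obtain ⟨h, hhspan, hmatch⟩ := exists_span_match f htotal g s
  obtain ⟨c, hc⟩ := Finsupp.mem_span_range_iff_exists_finsupp.1 hhspan
  -- rational approximation
  set B : ℝ := ∑ n ∈ c.support, ∑ x ∈ s, |f n x| with hB
  have hBnonneg : 0 ≤ B := Finset.sum_nonneg fun n _ =>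
    Finset.sum_nonneg fun x _ => abs_nonneg _
  set εmin : ℝ := s.inf' hsne ε with hεmin
  have hεminpos : 0 < εmin := by
    rw [hεmin, Finset.lt_inf'_iff]
    intro x hx
    exact hε x ((Set.Finite.mem_toFinset hIfin).1 hx)
  set δ : ℝ := εmin / (B + 1) with hδ
  have hδpos : 0 < δ := div_pos hεminpos (by linarith)
  choose q hq using fun n => exists_rat_near (K := ℝ) (c n) hδpos
  set c' : ℕ →₀ ℚ := Finsupp.onFinset c.support
      (fun n => if n ∈ c.support then q n else 0)
      (fun n hn => by by_contra h'; simp [h'] at hn) with hc'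
  have hc'supp : c'.support ⊆ c.support := Finsupp.support_onFinset_subset
  set h' : X →L[ℝ] ℝ := c'.sum fun n q => (q : ℝ) • f n with hh'
  refine ⟨ρ h', ⟨h', ⟨c', rfl⟩, rfl⟩, ?_⟩
  intro x hxI
  have hxs : x ∈ s := (Set.Finite.mem_toFinset hIfin).2 hxI
  -- compute the difference
  have hsum' : h' = ∑ n ∈ c.support, ((c' n : ℝ)) • f n := by
    rw [hh']
    exact Finsupp.sum_of_support_subset c' hc'supp _ (fun i _ => by simp)
  have hsum : h = ∑ n ∈ c.support, (c n) • f n := by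
    rw [← hc]; rfl
  have hdiff : |h' x - h x| < εmin := by
    have hval : h' x - h x = ∑ n ∈ c.support, ((c' n : ℝ) - c n) * f n x := by
      rw [hsum', hsum, ContinuousLinearMap.sum_apply, ContinuousLinearMap.sum_apply,
        ← Finset.sum_sub_distrib]
      refine Finset.sum_congr rfl fun n _ => ?_
      simp [ContinuousLinearMap.smul_apply, smul_eq_mul, sub_mul]
    rw [hval]
    calc |∑ n ∈ c.support, ((c' n : ℝ) - c n) * f n x|
        ≤ ∑ n ∈ c.support, |((c' n : ℝ) - c n) * f n x| := Finset.abs_sum_le_sum_abs _ _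
      _ ≤ ∑ n ∈ c.support, δ * |f n x| := by
          refine Finset.sum_le_sum fun n hn => ?_
          rw [abs_mul]
          refine mul_le_mul_of_nonneg_right ?_ (abs_nonneg _)
          have hcn : c' n = q n := by rw [hc', Finsupp.onFinset_apply, if_pos hn]
          rw [hcn, abs_sub_comm]
          exact (hq n).le
      _ ≤ ∑ n ∈ c.support, δ * (∑ x' ∈ s, |f n x'|) := by
          refine Finset.sum_le_sum fun n hn => ?_
          refine mul_le_mul_of_nonneg_left ?_ hδpos.le
          exact Finset.single_le_sum (fun x' _ => abs_nonneg (f n x')) hxs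
      _ = δ * B := by rw [hB, ← Finset.mul_sum]
      _ < εmin := by
          rw [hδ]
          rw [div_mul_eq_mul_div, div_lt_iff₀ (by linarith)]
          nlinarith
  have heq : ρ h' x - ρ g x = h' x - h x := by
    have hgx := hmatch x hxs
    simp only [hρ, topDualPairing_apply, hgx]
    rfl
  show ρ h' x ∈ Metric.ball (ρ g x) (ε x)
  rw [Metric.mem_ball, Real.dist_eq, heq]
  exact lt_of_lt_of_le hdiff (Finset.inf'_le ε hxs)
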